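/- Let f ∈ ℚ[x] with f(0) ≠ 0 have no multiple roots and suppose no root of f is a root of rational. If the Galois-like group G_f^B or G_f^ℚ is doubly transitive (as a permutation group on the roots), then the lattice R_f^ℚ is trivial; if the Galois-like group G_f is doubly transitive, then the lattice R_f is trivial. -/

import Mathlib

noncomputable section

open Polynomial

/-- `z` is a root of rational: some positive power of `z` is rational. -/
def IsRootOfRational (z : ℂ) : Prop := ∃ k : ℕ, 0 < k ∧ ∃ q : ℚ, z ^ k = (q : ℂ)

/-- `z` is a rational number (viewed in `ℂ`). -/
def IsRat (z : ℂ) : Prop := ∃ q : ℚ, z = (q : ℂ)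

/-- The Galois-like group `G_f`: permutations of the (indexed) roots preserving all
multiplicative relations. -/
def GaloisLike {ι : Type*} [Fintype ι] (r : ι → ℂ) : Set (Equiv.Perm ι) :=
  {σ | ∀ v : ι → ℤ, (∏ i, r i ^ v i) = 1 → (∏ i, r (σ i) ^ v i) = 1}

/-- The Galois-like group `G_f^B`. -/
def GaloisLikeB {ι : Type*} [Fintype ι] (r : ι → ℂ) : Set (Equiv.Perm ι) :=
  {σ | ∀ v : ι → ℤ, IsRat (∏ i, r i ^ v i) → (∏ i, r (σ i) ^ v i) = ∏ i, r i ^ v i}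

/-- The Galois-like group `G_f^ℚ`. -/
def GaloisLikeQ {ι : Type*} [Fintype ι] (r : ι → ℂ) : Set (Equiv.Perm ι) :=
  {σ | ∀ v : ι → ℤ, IsRat (∏ i, r i ^ v i) → IsRat (∏ i, r (σ i) ^ v i)}

/-- The exponent lattice of the vector `w` is trivial. -/
def VecLatticeTrivial {ι : Type*} [Fintype ι] (w : ι → ℂ) : Prop :=
  ∀ u : ι → ℤ, (∏ i, w i ^ u i) = 1 → ∀ i j : ι, u i = u j

/-- The lattice `R_w^ℚ` of the vector `w` is trivial. -/
def VecLatticeQTrivial {ι : Type*} [Fintype ι] (w : ι → ℂ) : Prop :=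
  ∀ u : ι → ℤ, IsRat (∏ i, w i ^ u i) → ∀ i j : ι, u i = u j

/-- A subset `M ⊆ ℚ[G/H]` is ℚ-admissible: there is `μ ∈ ℚ[G]` with stabilizer
(under left multiplication) exactly `H` such that `mμ = 0` for all `m ∈ M`
(here `Σ_{g∈G} m(ḡ) • gμ = |H| ⋅ (mμ)`, so we express `mμ = 0` this way). -/
def IsQAdmissible {G : Type*} [Group G] (H : Subgroup G) (M : Set ((G ⧸ H) →₀ ℚ)) : Prop :=
  ∃ μ : MonoidAlgebra ℚ G,
    (∀ g : G, MonoidAlgebra.single g (1 : ℚ) * μ = μ ↔ g ∈ H) ∧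
    ∀ m ∈ M, (∑ᶠ g : G, m (QuotientGroup.mk g) • (MonoidAlgebra.single g (1 : ℚ) * μ)) = 0

/-- A ℚ-subspace of `ℚ[G/H]` is a `ℚ[G]`-submodule iff it is stable under the
permutation action of `G` on `G/H`. -/
def IsGStable {G : Type*} [Group G] (H : Subgroup G) (M : Submodule ℚ ((G ⧸ H) →₀ ℚ)) : Prop :=
  ∀ g : G, ∀ m ∈ M, Finsupp.mapDomain (fun x : G ⧸ H => g • x) m ∈ M

/-- The pair `(G,H)` is ℚ-trivial: the only ℚ-admissible `ℚ[G]`-submodules of `ℚ[G/H]`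
are `0` and `V₁` (the line of constant coefficient vectors). -/
def QTrivialPair {G : Type*} [Group G] (H : Subgroup G) : Prop :=
  ∀ M : Submodule ℚ ((G ⧸ H) →₀ ℚ), IsGStable H M →
    IsQAdmissible H (M : Set ((G ⧸ H) →₀ ℚ)) →
    M = ⊥ ∨ (M : Set ((G ⧸ H) →₀ ℚ)) = {m | ∃ a : ℚ, ∀ x, m x = a}

/-- The action of `G` on `G/H` is transitive. -/
def PairTransitive {G : Type*} [Group G] (H : Subgroup G) : Prop :=
  ∀ x y : G ⧸ H, ∃ g : G, g • x = y

/-- The action of `G` on `G/H` is doubly transitive. -/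
def PairDoublyTransitive {G : Type*} [Group G] (H : Subgroup G) : Prop :=
  ∀ x₁ x₂ y₁ y₂ : G ⧸ H, x₁ ≠ x₂ → y₁ ≠ y₂ → ∃ g : G, g • x₁ = y₁ ∧ g • x₂ = y₂

/-- The action of `G` on `G/H` is doubly homogeneous. -/
def PairDoublyHomogeneous {G : Type*} [Group G] (H : Subgroup G) : Prop :=
  ∀ x₁ x₂ y₁ y₂ : G ⧸ H, x₁ ≠ x₂ → y₁ ≠ y₂ →
    ∃ g : G, ({g • x₁, g • x₂} : Set (G ⧸ H)) = {y₁, y₂}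

/-- A set of permutations of `ι` acts transitively. -/
def SetTransitive {ι : Type*} (S : Set (Equiv.Perm ι)) : Prop :=
  ∀ i j : ι, ∃ σ ∈ S, σ i = j

/-- A set of permutations of `ι` acts doubly transitively. -/
def SetDoublyTransitive {ι : Type*} (S : Set (Equiv.Perm ι)) : Prop :=
  ∀ i j k l : ι, i ≠ j → k ≠ l → ∃ σ ∈ S, σ i = k ∧ σ j = l

/-- A set of permutations of `ι` acts doubly homogeneously. -/
def SetDoublyHomogeneous {ι : Type*} (S : Set (Equiv.Perm ι)) : Prop :=
  ∀ i j k l : ι, i ≠ j → k ≠ l → ∃ σ ∈ S, ({σ i, σ j} : Set ι) = {k, l}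


lemma isRat_one : IsRat 1 := ⟨1, by norm_num⟩

lemma isRat_mul {a b : ℂ} (ha : IsRat a) (hb : IsRat b) : IsRat (a * b) := by
  obtain ⟨qa, rfl⟩ := ha; obtain ⟨qb, rfl⟩ := hb
  exact ⟨qa * qb, by push_cast; ring⟩

lemma isRat_zpow {a : ℂ} (ha : IsRat a) (d : ℤ) : IsRat (a ^ d) := by
  obtain ⟨q, rfl⟩ := ha
  exact ⟨q ^ d, by rw [← Rat.cast_zpow]⟩

lemma isRat_prod {α : Type*} (s : Finset α) (f : α → ℂ) (h : ∀ x ∈ s, IsRat (f x)) :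
    IsRat (∏ x ∈ s, f x) :=
  Finset.prod_induction f IsRat (fun _ _ => isRat_mul) isRat_one h

lemma prod_perm {n : ℕ} (r : Fin n → ℂ) (σ : Equiv.Perm (Fin n)) (v : Fin n → ℤ) :
    (∏ i, r (σ i) ^ v i) = ∏ j, r j ^ v (σ.symm j) := by
  rw [← Equiv.prod_comp σ (fun j => r j ^ v (σ.symm j))]
  simp

lemma key {n : ℕ} (r : Fin n → ℂ) (hr0 : ∀ i, r i ≠ 0) (hP : IsRat (∏ i, r i))
    (R : (Fin n → ℤ) → Prop) (hzero : R 0)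
    (hadd : ∀ u v, R u → R v → R (u + v))
    (hsub : ∀ u v, R u → R v → R (u - v))
    (hrat : ∀ u, R u → IsRat (∏ i, r i ^ u i))
    (S : Set (Equiv.Perm (Fin n)))
    (hS : ∀ σ ∈ S, ∀ u, R u → R (u ∘ ⇑σ.symm))
    (hdt : SetDoublyTransitive S)
    (hnr : ∀ i, ¬ IsRootOfRational (r i)) :
    ∀ u, R u → ∀ i j, u i = u j := by
  classical
  intro u hu
  by_contra hcon
  push_neg at hcon
  obtain ⟨i0, j0, hij⟩ := hcon
  have hij0 : i0 ≠ j0 := fun h => hij (by rw [h])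
  have hn1 : 1 ≤ n := i0.pos
  have hn0 : (n : ℤ) ≠ 0 := by exact_mod_cast (Nat.one_le_iff_ne_zero.mp hn1)
  -- the monoid of lattice-preserving permutations
  set Tm : Equiv.Perm (Fin n) → Prop := fun π => ∀ v, R v → R (v ∘ ⇑π.symm) with hTmdef
  have hT1 : Tm 1 := by
    intro v hv
    have h : v ∘ ⇑(1 : Equiv.Perm (Fin n)).symm = v := by ext x; rfl
    rwa [h]
  have hTmul : ∀ π π', Tm π → Tm π' → Tm (π * π') := by
    intro π π' h h' v hv
    have he : v ∘ ⇑(π * π').symm = (v ∘ ⇑π'.symm) ∘ ⇑π.symm := by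
      ext x; simp [Equiv.Perm.mul_def, Equiv.symm_trans_apply]
    rw [he]; exact h _ (h' v hv)
  have hTpow : ∀ π, Tm π → ∀ m : ℕ, Tm (π ^ m) := by
    intro π h m
    induction m with
    | zero => simpa using hT1
    | succ m ih => rw [pow_succ]; exact hTmul _ _ ih h
  have hTinv : ∀ π, Tm π → Tm π⁻¹ := by
    intro π h
    have hpos : 0 < orderOf π := orderOf_pos π
    have he : π⁻¹ = π ^ (orderOf π - 1) := by
      apply inv_eq_of_mul_eq_one_right
      rw [← pow_succ', Nat.sub_add_cancel hpos]
      exact pow_orderOf_eq_one π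
    rw [he]; exact hTpow _ h _
  set GF : Finset (Equiv.Perm (Fin n)) := Finset.univ.filter Tm with hGFdef
  have hGF : ∀ σ, σ ∈ GF ↔ Tm σ := by intro σ; simp [hGFdef]
  have hSGF : ∀ σ ∈ S, σ ∈ GF := fun σ hσ => (hGF σ).mpr (fun v hv => hS σ hσ v hv)
  set s : ℤ := ∑ p, u p with hsdef
  obtain ⟨i1, hi1⟩ : ∃ i, (n : ℤ) * u i ≠ s := by
    by_contra h
    push_neg at h
    exact hij (mul_left_cancel₀ hn0 ((h i0).trans (h j0).symm))
  obtain ⟨p0, hp0⟩ : ∃ p, p ≠ i1 := by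
    rcases eq_or_ne i0 i1 with h | h
    · exact ⟨j0, by rw [← h]; exact hij0.symm⟩
    · exact ⟨i0, h⟩
  set cnt : Fin n → Fin n → Fin n → ℕ := fun k m p =>
    (GF.filter (fun σ => σ i1 = k ∧ σ p = m)).card with hcntdef
  have hcnt_p : ∀ k m p p', p ≠ i1 → p' ≠ i1 → cnt k m p = cnt k m p' := by
    intro k m p p' hp hp'
    obtain ⟨ρ, hρS, hρ1, hρ2⟩ := hdt i1 p' i1 p hp'.symm hp.symm
    have hρGF := hSGF ρ hρS
    refine Finset.card_bij' (fun σ _ => σ * ρ) (fun σ _ => σ * ρ⁻¹) ?_ ?_ ?_ ?_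
    · intro σ hσ
      obtain ⟨h1, h2, h3⟩ := Finset.mem_filter.mp hσ
      refine Finset.mem_filter.mpr ⟨(hGF _).mpr (hTmul _ _ ((hGF _).mp h1) ((hGF _).mp hρGF)), ?_, ?_⟩
      · rw [Equiv.Perm.mul_apply, hρ1, h2]
      · rw [Equiv.Perm.mul_apply, hρ2, h3]
    · intro σ hσ
      obtain ⟨h1, h2, h3⟩ := Finset.mem_filter.mp hσ
      refine Finset.mem_filter.mpr ⟨(hGF _).mpr (hTmul _ _ ((hGF _).mp h1) (hTinv _ ((hGF _).mp hρGF))), ?_, ?_⟩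
      · rw [Equiv.Perm.mul_apply, show ρ⁻¹ i1 = i1 from (Equiv.Perm.inv_eq_iff_eq).mpr hρ1.symm, h2]
      · rw [Equiv.Perm.mul_apply, show ρ⁻¹ p = p' from (Equiv.Perm.inv_eq_iff_eq).mpr hρ2.symm, h3]
    · intro σ hσ; group
    · intro σ hσ; group
  have hcnt_k : ∀ k m k' m', k ≠ m → k' ≠ m' → cnt k m p0 = cnt k' m' p0 := by
    intro k m k' m' hkm hkm'
    obtain ⟨τ, hτS, hτ1, hτ2⟩ := hdt k m k' m' hkm hkm'
    have hτGF := hSGF τ hτS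
    refine Finset.card_bij' (fun σ _ => τ * σ) (fun σ _ => τ⁻¹ * σ) ?_ ?_ ?_ ?_
    · intro σ hσ
      obtain ⟨h1, h2, h3⟩ := Finset.mem_filter.mp hσ
      refine Finset.mem_filter.mpr ⟨(hGF _).mpr (hTmul _ _ ((hGF _).mp hτGF) ((hGF _).mp h1)), ?_, ?_⟩
      · rw [Equiv.Perm.mul_apply, h2, hτ1]
      · rw [Equiv.Perm.mul_apply, h3, hτ2]
    · intro σ hσ
      obtain ⟨h1, h2, h3⟩ := Finset.mem_filter.mp hσ
      refine Finset.mem_filter.mpr ⟨(hGF _).mpr (hTmul _ _ (hTinv _ ((hGF _).mp hτGF)) ((hGF _).mp h1)), ?_, ?_⟩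
      · rw [Equiv.Perm.mul_apply, h2, (Equiv.Perm.inv_eq_iff_eq).mpr hτ1.symm]
      · rw [Equiv.Perm.mul_apply, h3, (Equiv.Perm.inv_eq_iff_eq).mpr hτ2.symm]
    · intro σ hσ; group
    · intro σ hσ; group
  set c : ℕ := cnt i0 j0 p0 with hcdef
  have hcnt : ∀ k m p, k ≠ m → p ≠ i1 → cnt k m p = c := fun k m p hkm hp =>
    (hcnt_p k m p p0 hp hp0).trans (hcnt_k k m i0 j0 hkm hij0)
  have hc0 : c ≠ 0 := by
    obtain ⟨σ, hσS, h1, h2⟩ := hdt i1 p0 i0 j0 (Ne.symm hp0) hij0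
    have hmem : σ ∈ GF.filter (fun σ => σ i1 = i0 ∧ σ p0 = j0) :=
      Finset.mem_filter.mpr ⟨hSGF σ hσS, h1, h2⟩
    exact Finset.card_ne_zero_of_mem hmem
  have hAcard : ∀ k, (GF.filter (fun σ => σ i1 = k)).card = (n - 1) * c := by
    intro k
    have hmaps : ∀ σ ∈ GF.filter (fun σ => σ i1 = k), σ p0 ∈ Finset.univ.erase k := by
      intro σ hσ
      obtain ⟨_, hσ1⟩ := Finset.mem_filter.mp hσ
      refine Finset.mem_erase.mpr ⟨?_, Finset.mem_univ _⟩
      rw [← hσ1]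
      exact fun h => hp0 (σ.injective h)
    rw [Finset.card_eq_sum_card_fiberwise hmaps]
    rw [Finset.sum_congr rfl (fun m hm => ?_), Finset.sum_const,
      Finset.card_erase_of_mem (Finset.mem_univ k), Finset.card_univ, Fintype.card_fin,
      smul_eq_mul]
    rw [Finset.filter_filter]
    exact hcnt k m p0 (Ne.symm (Finset.ne_of_mem_erase hm)) hp0
  set Tk : Fin n → Fin n → ℤ := fun k => ∑ σ ∈ GF.filter (fun σ => σ i1 = k), (u ∘ ⇑σ.symm)
    with hTkdef
  have hTkR : ∀ k, R (Tk k) := by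
    intro k
    apply Finset.sum_induction _ R hadd hzero
    intro σ hσ
    exact ((hGF σ).mp (Finset.mem_filter.mp hσ).1) u hu
  have hTk_k : ∀ k, Tk k k = ((n - 1) * c : ℕ) * u i1 := by
    intro k
    rw [hTkdef]
    simp only [Finset.sum_apply, Function.comp_apply]
    rw [Finset.sum_congr rfl (fun σ hσ => ?_), Finset.sum_const, hAcard k, nsmul_eq_mul]
    have hσ1 := (Finset.mem_filter.mp hσ).2
    have : σ.symm k = i1 := σ.symm_apply_eq.mpr hσ1.symm
    rw [this]
  have hTk_m : ∀ k m, m ≠ k → Tk k m = (c : ℤ) * (s - u i1) := by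
    intro k m hmk
    rw [hTkdef]
    simp only [Finset.sum_apply, Function.comp_apply]
    have hmaps : ∀ σ ∈ GF.filter (fun σ => σ i1 = k), σ.symm m ∈ Finset.univ.erase i1 := by
      intro σ hσ
      obtain ⟨_, hσ1⟩ := Finset.mem_filter.mp hσ
      refine Finset.mem_erase.mpr ⟨?_, Finset.mem_univ _⟩
      intro h
      exact hmk (by rw [← hσ1, ← h, Equiv.apply_symm_apply])
    rw [← Finset.sum_fiberwise_of_maps_to hmaps (fun σ => u (σ.symm m))]
    have hfib : ∀ p ∈ Finset.univ.erase i1,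
        (∑ σ ∈ (GF.filter (fun σ => σ i1 = k)).filter (fun σ => σ.symm m = p), u (σ.symm m))
          = (c : ℤ) * u p := by
      intro p hp
      have hpne : p ≠ i1 := Finset.ne_of_mem_erase hp
      rw [Finset.sum_congr rfl (fun σ hσ => ?_), Finset.sum_const, nsmul_eq_mul]
      · congr 1
        rw [Finset.filter_filter]
        rw [show ((GF.filter fun σ => σ i1 = k ∧ σ.symm m = p).card) =
          ((GF.filter fun σ => σ i1 = k ∧ σ p = m).card) from ?_]
        · exact_mod_cast congrArg (Nat.cast : ℕ → ℤ) (hcnt k m p (Ne.symm hmk) hpne)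
        · congr 1
          apply Finset.filter_congr
          intro σ _
          constructor
          · rintro ⟨h1, h2⟩; exact ⟨h1, by rw [← h2, Equiv.apply_symm_apply]⟩
          · rintro ⟨h1, h2⟩; exact ⟨h1, by rw [← h2, Equiv.symm_apply_apply]⟩
      · have := (Finset.mem_filter.mp hσ).2
        rw [this]
    rw [Finset.sum_congr rfl hfib, ← Finset.mul_sum]
    congr 1
    rw [Finset.sum_erase_eq_sub (Finset.mem_univ i1)]
  set d : ℤ := (c : ℤ) * ((n : ℤ) * u i1 - s) with hddef
  have hdne : d ≠ 0 := mul_ne_zero (by exact_mod_cast hc0) (sub_ne_zero.mpr hi1)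
  have hpair : ∀ k l, k ≠ l → IsRat (r k ^ d * r l ^ (-d)) := by
    intro k l hkl
    have hR : R (Tk k - Tk l) := hsub _ _ (hTkR k) (hTkR l)
    have hval : ∀ m, (Tk k - Tk l) m = if m = k then d else if m = l then -d else 0 := by
      intro m
      rcases eq_or_ne m k with h | hmk
      · subst h
        rw [if_pos rfl, Pi.sub_apply, hTk_k m, hTk_m l m hkl, hddef]
        push_cast [Nat.cast_sub hn1]
        ring
      rcases eq_or_ne m l with h | hml
      · subst h
        rw [if_neg hmk, if_pos rfl, Pi.sub_apply, hTk_m k m hmk, hTk_k m, hddef]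
        push_cast [Nat.cast_sub hn1]
        ring
      · rw [if_neg hmk, if_neg hml, Pi.sub_apply, hTk_m k m hmk, hTk_m l m hml, sub_self]
    have hprodeq : (∏ m, r m ^ (Tk k - Tk l) m) = r k ^ d * r l ^ (-d) := by
      rw [Finset.prod_congr rfl (fun m _ => by rw [hval m])]
      rw [← Finset.prod_subset (Finset.subset_univ ({k, l} : Finset (Fin n)))
        (fun m _ hm => ?_)]
      · rw [Finset.prod_pair hkl, if_pos rfl, if_neg (Ne.symm hkl), if_pos rfl]
      · simp only [Finset.mem_insert, Finset.mem_singleton, not_or] at hm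
        rw [if_neg hm.1, if_neg hm.2, zpow_zero]
    have hfin := hrat _ hR
    rwa [hprodeq] at hfin
  have h1 : IsRat (∏ l ∈ Finset.univ.erase i0, (r i0 ^ d * r l ^ (-d))) :=
    isRat_prod _ _ (fun l hl => hpair i0 l (Ne.symm (Finset.ne_of_mem_erase hl)))
  have h2 : IsRat ((∏ i, r i) ^ d) := isRat_zpow hP d
  have hcomb : IsRat (r i0 ^ (d * n)) := by
    have h3 := isRat_mul h1 h2
    have hPe : (∏ i, r i) = r i0 * ∏ l ∈ Finset.univ.erase i0, r l :=
      (Finset.mul_prod_erase _ _ (Finset.mem_univ i0)).symm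
    have hyne : (∏ l ∈ Finset.univ.erase i0, r l) ≠ 0 :=
      Finset.prod_ne_zero_iff.mpr (fun l _ => hr0 l)
    have heq : (∏ l ∈ Finset.univ.erase i0, (r i0 ^ d * r l ^ (-d))) * (∏ i, r i) ^ d
        = r i0 ^ (d * n) := by
      rw [Finset.prod_mul_distrib, Finset.prod_const,
        Finset.card_erase_of_mem (Finset.mem_univ i0),
        Finset.card_univ, Fintype.card_fin, hPe, mul_zpow, Finset.prod_zpow]
      have e2 : ((∏ l ∈ Finset.univ.erase i0, r l) ^ d)⁻¹
          * (∏ l ∈ Finset.univ.erase i0, r l) ^ d = 1 :=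
        inv_mul_cancel₀ (zpow_ne_zero _ hyne)
      have e3 : (r i0 ^ d) ^ ((n - 1 : ℕ)) * (r i0 ^ d) = r i0 ^ (d * n) := by
        rw [← zpow_natCast (r i0 ^ d) (n - 1), ← zpow_mul, ← zpow_add₀ (hr0 i0)]
        congr 1
        push_cast [Nat.cast_sub hn1]
        ring
      calc (r i0 ^ d) ^ (n - 1) * (∏ l ∈ Finset.univ.erase i0, r l) ^ (-d)
            * (r i0 ^ d * (∏ l ∈ Finset.univ.erase i0, r l) ^ d)
          = ((r i0 ^ d) ^ (n - 1) * (r i0 ^ d))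
            * (((∏ l ∈ Finset.univ.erase i0, r l) ^ d)⁻¹
              * (∏ l ∈ Finset.univ.erase i0, r l) ^ d) := by
            rw [zpow_neg]; ring
        _ = r i0 ^ (d * n) := by rw [e2, mul_one, e3]
    rwa [heq] at h3
  refine hnr i0 ?_
  obtain ⟨q, hq⟩ := hcomb
  have hDne : d * (n : ℤ) ≠ 0 := mul_ne_zero hdne hn0
  rcases hDne.lt_or_gt with hD | hD
  · refine ⟨(-(d * (n : ℤ))).toNat, by omega, q⁻¹, ?_⟩
    have he : (r i0) ^ ((-(d * (n : ℤ))).toNat) = r i0 ^ (-(d * (n : ℤ))) := by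
      rw [← zpow_natCast, Int.toNat_of_nonneg (by omega)]
    rw [he, zpow_neg, hq, ← Rat.cast_inv]
  · refine ⟨(d * (n : ℤ)).toNat, by omega, q, ?_⟩
    have he : (r i0) ^ ((d * (n : ℤ)).toNat) = r i0 ^ (d * (n : ℤ)) := by
      rw [← zpow_natCast, Int.toNat_of_nonneg (by omega)]
    rw [he, hq]

lemma root_ne_zero (f : Polynomial ℚ) (hf0 : f.eval 0 ≠ 0) (z : ℂ)
    (hz : Polynomial.aeval z f = 0) : z ≠ 0 := by
  rintro rfl
  apply hf0
  rw [Polynomial.aeval_def, Polynomial.eval₂_at_zero] at hz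
  have h0 : f.coeff 0 = 0 := by
    have : ((f.coeff 0 : ℚ) : ℂ) = 0 := hz
    exact_mod_cast this
  rwa [Polynomial.coeff_zero_eq_eval_zero] at h0

lemma prod_roots_rat (f : Polynomial ℚ) (hf0 : f.eval 0 ≠ 0) (n : ℕ) (hn : n = f.natDegree)
    (r : Fin n → ℂ) (hinj : Function.Injective r)
    (hroot : ∀ i, Polynomial.aeval (r i) f = 0) :
    IsRat (∏ i, r i) := by
  classical
  have hf : f ≠ 0 := fun h => hf0 (by simp [h])
  set F : Polynomial ℂ := f.map (algebraMap ℚ ℂ) with hFdef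
  have hF : F ≠ 0 := by
    rw [hFdef, Polynomial.map_ne_zero_iff (algebraMap ℚ ℂ).injective]
    exact hf
  have hdeg : F.natDegree = n := by
    rw [hFdef, Polynomial.natDegree_map, hn]
  have hsplit : F.Splits := IsAlgClosed.splits F
  have hcard : F.roots.card = n := (Polynomial.splits_iff_card_roots.mp hsplit).trans hdeg
  have hroots_mem : ∀ i, r i ∈ F.roots := by
    intro i
    rw [Polynomial.mem_roots hF]
    show F.IsRoot (r i)
    rw [Polynomial.IsRoot, hFdef, Polynomial.eval_map, ← Polynomial.aeval_def]
    exact hroot i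
  set M : Multiset ℂ := Finset.univ.val.map r with hMdef
  have hM_nodup : M.Nodup := Multiset.Nodup.map hinj Finset.univ.nodup
  have hle : M ≤ F.roots := by
    rw [Multiset.le_iff_subset hM_nodup]
    intro z hz
    obtain ⟨i, _, rfl⟩ := Multiset.mem_map.mp hz
    exact hroots_mem i
  have hMcard : M.card = n := by
    rw [hMdef, Multiset.card_map]
    simp
  have heq : M = F.roots := Multiset.eq_of_le_of_card_le hle (by rw [hcard, hMcard])
  have hfac : F = Polynomial.C F.leadingCoeff * (F.roots.map fun a => X - C a).prod :=
    hsplit.eq_prod_roots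
  have hlc : F.leadingCoeff = algebraMap ℚ ℂ f.leadingCoeff := by
    rw [hFdef]
    exact Polynomial.leadingCoeff_map (algebraMap ℚ ℂ)
  have heval : algebraMap ℚ ℂ (f.eval 0) = F.eval 0 := (Polynomial.eval_zero_map _ f).symm
  have heval2 : F.eval 0 = algebraMap ℚ ℂ f.leadingCoeff * ((-1) ^ n * ∏ i, r i) := by
    conv_lhs => rw [hfac]
    rw [Polynomial.eval_mul, Polynomial.eval_C, hlc, ← heq, hMdef]
    congr 1
    rw [Polynomial.eval_multiset_prod, Multiset.map_map, Multiset.map_map]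
    have hcomp : ((Polynomial.eval 0 ∘ fun a => X - C a) ∘ r) = fun i => (-1) * r i := by
      funext i; simp
    rw [hcomp]
    rw [show (Multiset.map (fun i => (-1 : ℂ) * r i) Finset.univ.val).prod
        = ∏ i, ((-1 : ℂ) * r i) from rfl]
    rw [Finset.prod_mul_distrib, Finset.prod_const, Finset.card_univ, Fintype.card_fin]
  have hlcne : f.leadingCoeff ≠ 0 := Polynomial.leadingCoeff_ne_zero.mpr hf
  refine ⟨(-1) ^ n * f.eval 0 / f.leadingCoeff, ?_⟩
  have hthis := heval.trans heval2
  have hlcC : (algebraMap ℚ ℂ) f.leadingCoeff ≠ 0 := by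
    simpa using hlcne
  rw [Rat.cast_div, Rat.cast_mul, Rat.cast_pow, Rat.cast_neg, Rat.cast_one]
  rw [show ((f.eval 0 : ℚ) : ℂ) = (algebraMap ℚ ℂ) (f.eval 0) from rfl, hthis]
  have hsq : ((-1 : ℂ)) ^ n * (-1 : ℂ) ^ n = 1 := by
    rw [← pow_add, ← two_mul, pow_mul]
    norm_num
  have hh : ((-1 : ℂ)) ^ n * ((algebraMap ℚ ℂ) f.leadingCoeff * ((-1) ^ n * ∏ i, r i))
      = (algebraMap ℚ ℂ) f.leadingCoeff * ∏ i, r i := by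
    linear_combination ((algebraMap ℚ ℂ) f.leadingCoeff * ∏ i, r i) * hsq
  rw [hh, show ((f.leadingCoeff : ℚ) : ℂ) = (algebraMap ℚ ℂ) f.leadingCoeff from rfl,
    mul_div_cancel_left₀ _ hlcC]

lemma isRat_div {a b : ℂ} (ha : IsRat a) (hb : IsRat b) : IsRat (a / b) := by
  obtain ⟨qa, rfl⟩ := ha; obtain ⟨qb, rfl⟩ := hb
  exact ⟨qa / qb, by rw [Rat.cast_div]⟩

/-- Let `f ∈ ℚ[x]` with `f(0) ≠ 0` have no multiple roots and suppose
no root of `f` is a root of rational. If `G_f^B` or `G_f^ℚ` is doubly transitive on the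
roots, then `R_f^ℚ` is trivial; if `G_f` is doubly transitive, then `R_f` is trivial. -/
theorem statement12 (f : Polynomial ℚ) (hf0 : f.eval 0 ≠ 0) (n : ℕ) (hn : n = f.natDegree)
    (r : Fin n → ℂ) (hinj : Function.Injective r)
    (hroot : ∀ i, Polynomial.aeval (r i) f = 0)
    (hall : ∀ z : ℂ, Polynomial.aeval z f = 0 → ∃ i, r i = z)
    (hnr : ∀ i, ¬ IsRootOfRational (r i)) :
    ((SetDoublyTransitive (GaloisLikeB r) ∨ SetDoublyTransitive (GaloisLikeQ r)) →
      VecLatticeQTrivial r) ∧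
    (SetDoublyTransitive (GaloisLike r) → VecLatticeTrivial r) := by
  have hr0 : ∀ i, r i ≠ 0 := fun i => root_ne_zero f hf0 (r i) (hroot i)
  have hP : IsRat (∏ i, r i) := prod_roots_rat f hf0 n hn r hinj hroot
  have hprod_add : ∀ u v : Fin n → ℤ,
      (∏ i, r i ^ (u + v) i) = (∏ i, r i ^ u i) * (∏ i, r i ^ v i) := by
    intro u v
    rw [← Finset.prod_mul_distrib]
    exact Finset.prod_congr rfl fun i _ => by rw [Pi.add_apply, zpow_add₀ (hr0 i)]
  have hprod_sub : ∀ u v : Fin n → ℤ,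
      (∏ i, r i ^ (u - v) i) = (∏ i, r i ^ u i) / (∏ i, r i ^ v i) := by
    intro u v
    rw [← Finset.prod_div_distrib]
    exact Finset.prod_congr rfl fun i _ => by rw [Pi.sub_apply, zpow_sub₀ (hr0 i)]
  have hprod_zero : (∏ i, r i ^ (0 : Fin n → ℤ) i) = 1 := by simp
  have hperm : ∀ (σ : Equiv.Perm (Fin n)) (u : Fin n → ℤ),
      (∏ i, r i ^ (u ∘ ⇑σ.symm) i) = ∏ i, r (σ i) ^ u i := by
    intro σ u
    rw [prod_perm r σ u]
    rfl
  constructor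
  · rintro (hB | hQ)
    · intro u hu i j
      refine key r hr0 hP (fun u => IsRat (∏ i, r i ^ u i))
        (show IsRat (∏ i, r i ^ (0 : Fin n → ℤ) i) by rw [hprod_zero]; exact isRat_one)
        (fun u v hu hv => show IsRat (∏ i, r i ^ (u + v) i) by rw [hprod_add]; exact isRat_mul hu hv)
        (fun u v hu hv => show IsRat (∏ i, r i ^ (u - v) i) by rw [hprod_sub]; exact isRat_div hu hv)
        (fun u h => h)
        (GaloisLikeB r)
        (fun σ hσ u hu => show IsRat (∏ i, r i ^ (u ∘ ⇑σ.symm) i) by rw [hperm σ u, hσ u hu]; exact hu)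
        hB hnr u hu i j
    · intro u hu i j
      refine key r hr0 hP (fun u => IsRat (∏ i, r i ^ u i))
        (show IsRat (∏ i, r i ^ (0 : Fin n → ℤ) i) by rw [hprod_zero]; exact isRat_one)
        (fun u v hu hv => show IsRat (∏ i, r i ^ (u + v) i) by rw [hprod_add]; exact isRat_mul hu hv)
        (fun u v hu hv => show IsRat (∏ i, r i ^ (u - v) i) by rw [hprod_sub]; exact isRat_div hu hv)
        (fun u h => h)
        (GaloisLikeQ r)
        (fun σ hσ u hu => show IsRat (∏ i, r i ^ (u ∘ ⇑σ.symm) i) by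
          rw [hperm σ u]; exact hσ u hu)
        hQ hnr u hu i j
  · intro hG u hu i j
    refine key r hr0 hP (fun u => (∏ i, r i ^ u i) = 1)
      hprod_zero
      (fun u v hu hv => show (∏ i, r i ^ (u + v) i) = 1 by rw [hprod_add, hu, hv, one_mul])
      (fun u v hu hv => show (∏ i, r i ^ (u - v) i) = 1 by rw [hprod_sub, hu, hv, div_one])
      (fun u h => by rw [h]; exact isRat_one)
      (GaloisLike r)
      (fun σ hσ u hu => show (∏ i, r i ^ (u ∘ ⇑σ.symm) i) = 1 by
        rw [hperm σ u]; exact hσ u hu)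
      hG hnr u hu i j

end
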